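/- Let Γ = (V,E) be a reduced finite simple graph and let π₁,π₂ ∈ Aut^π(Γ). Then α(π₁) = α(π₂) if and only if the right cosets Aut(Γ)π₁ and Aut(Γ)π₂ coincide; consequently the cardinality of the image of α equals the index |Aut^π(Γ)|/|Aut(Γ)|. Moreover, if Γ is connected and nonbipartite, then |Im(α)| equals the instability index Inst(Γ) = |Aut(BΓ)|/(2·|Aut(Γ)|). -/

import Mathlib

open SimpleGraph Pointwise

/-- A graph is reduced (vertex determining) if distinct vertices have distinct
open neighborhoods. -/
def Reduced {V : Type*} (G : SimpleGraph V) : Prop :=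
  ∀ u v : V, G.neighborSet u = G.neighborSet v → u = v

/-- The group of two-fold projections of a graph: permutations mapping every
open neighborhood onto some open neighborhood. -/
def autPi {V : Type*} [Fintype V] (G : SimpleGraph V) : Subgroup (Equiv.Perm V) where
  carrier := {π : Equiv.Perm V | ∀ v : V, ∃ w : V, π '' G.neighborSet v = G.neighborSet w}
  one_mem' := by
    intro v
    exact ⟨v, by simp⟩
  mul_mem' := by
    intro a b ha hb v
    obtain ⟨w, hw⟩ := hb v
    obtain ⟨u, hu⟩ := ha w
    refine ⟨u, ?_⟩
    rw [Equiv.Perm.coe_mul, Set.image_comp, hw, hu]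
  inv_mem' := by
    intro a ha v
    have hfin : (Set.range G.neighborSet).Finite := Set.finite_range _
    have hmaps : Set.MapsTo (Set.image ⇑a) (Set.range G.neighborSet)
        (Set.range G.neighborSet) := by
      rintro s ⟨u, rfl⟩
      obtain ⟨w, hw⟩ := ha u
      exact ⟨w, hw.symm⟩
    have hinj : Set.InjOn (Set.image ⇑a) (Set.range G.neighborSet) :=
      (Set.image_injective.mpr a.injective).injOn
    have hbij := (hfin.injOn_iff_bijOn_of_mapsTo hmaps).mp hinj
    obtain ⟨s, hs, hsv⟩ := hbij.surjOn ⟨v, rfl⟩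
    obtain ⟨w, rfl⟩ := hs
    refine ⟨w, ?_⟩
    have : (⇑a⁻¹) '' ((⇑a) '' G.neighborSet w) = G.neighborSet w := by
      rw [← Set.image_comp]
      simp
    rw [← this, hsv]

/-- The automorphism group of a graph, as a subgroup of the permutations of its vertices. -/
def autG {V : Type*} [Fintype V] (G : SimpleGraph V) : Subgroup (Equiv.Perm V) where
  carrier := {π : Equiv.Perm V | ∀ v w : V, G.Adj (π v) (π w) ↔ G.Adj v w}
  one_mem' := by intro v w; rfl
  mul_mem' := by
    intro a b ha hb v w
    rw [Equiv.Perm.coe_mul, Function.comp_apply, Function.comp_apply, ha, hb]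
  inv_mem' := by
    intro a ha v w
    have h1 : a (a⁻¹ v) = v := by simp
    have h2 : a (a⁻¹ w) = w := by simp
    conv_rhs => rw [← h1, ← h2]
    rw [ha]

/-- The canonical double cover (bipartite double cover) of a graph. -/
def doubleCover {V : Type*} (G : SimpleGraph V) : SimpleGraph (V × Bool) where
  Adj a b := G.Adj a.1 b.1 ∧ a.2 ≠ b.2
  symm := ⟨fun a b h => ⟨h.1.symm, h.2.symm⟩⟩
  loopless := ⟨fun a h => h.2 rfl⟩

section helpers
variable {V : Type*} [Fintype V] {G : SimpleGraph V}

lemma mem_autG_iff_image {σ : Equiv.Perm V} :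
    σ ∈ autG G ↔ ∀ v, ⇑σ '' G.neighborSet v = G.neighborSet (σ v) := by
  constructor
  · intro h v
    ext w
    constructor
    · rintro ⟨u, hu, rfl⟩
      exact (h v u).mpr hu
    · intro hw
      refine ⟨σ⁻¹ w, ?_, by simp⟩
      have := (h v (σ⁻¹ w))
      rw [show σ (σ⁻¹ w) = w by simp] at this
      exact this.mp hw
  · intro h v w
    constructor
    · intro hadj
      have : σ w ∈ ⇑σ '' G.neighborSet v := (h v) ▸ hadj
      obtain ⟨u, hu, hu2⟩ := this
      rwa [σ.injective hu2] at hu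
    · intro hadj
      have : σ w ∈ ⇑σ '' G.neighborSet v := ⟨w, hadj, rfl⟩
      rw [h v] at this
      exact this

lemma autG_le_autPi : autG G ≤ autPi G := by
  intro σ hσ v
  exact ⟨σ v, mem_autG_iff_image.mp hσ v⟩

lemma mem_coset_iff (A : Subgroup (Equiv.Perm V)) (x y : Equiv.Perm V) :
    x ∈ (A : Set (Equiv.Perm V)) * {y} ↔ x * y⁻¹ ∈ A := by
  rw [Set.mem_mul]
  constructor
  · rintro ⟨a, ha, b, hb, rfl⟩
    rw [Set.mem_singleton_iff] at hb
    subst hb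
    simpa using ha
  · intro h
    exact ⟨x * y⁻¹, h, y, rfl, by group⟩

lemma coset_eq_iff (A : Subgroup (Equiv.Perm V)) (x y : Equiv.Perm V) :
    (A : Set (Equiv.Perm V)) * {x} = (A : Set (Equiv.Perm V)) * {y} ↔ y * x⁻¹ ∈ A := by
  constructor
  · intro h
    have hy : y ∈ (A : Set (Equiv.Perm V)) * {y} := by
      rw [mem_coset_iff, mul_inv_cancel]; exact A.one_mem
    rw [← h, mem_coset_iff] at hy
    exact hy
  · intro h
    ext z
    rw [mem_coset_iff, mem_coset_iff]
    constructor
    · intro hz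
      have : z * y⁻¹ = (z * x⁻¹) * (y * x⁻¹)⁻¹ := by group
      rw [this]
      exact A.mul_mem hz (A.inv_mem h)
    · intro hz
      have : z * x⁻¹ = (z * y⁻¹) * (y * x⁻¹) := by group
      rw [this]
      exact A.mul_mem hz h

variable (hred : Reduced G) (γ : autPi G → autPi G)
  (hγ : ∀ (π : autPi G) (v : V),
      (π : Equiv.Perm V) '' G.neighborSet v = G.neighborSet ((γ π : Equiv.Perm V) v))

include hred hγ

lemma gamma_uniq (π : autPi G) (v w : V)
    (h : (π : Equiv.Perm V) '' G.neighborSet v = G.neighborSet w) :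
    (γ π : Equiv.Perm V) v = w :=
  hred _ _ ((hγ π v).symm.trans h)

lemma gamma_mul (π π' : autPi G) : γ (π * π') = γ π * γ π' := by
  ext v
  show (γ (π * π') : Equiv.Perm V) v = ((γ π : Equiv.Perm V) * (γ π' : Equiv.Perm V)) v
  rw [Equiv.Perm.coe_mul, Function.comp_apply]
  refine gamma_uniq hred γ hγ (π * π') v _ ?_
  rw [Subgroup.coe_mul, Equiv.Perm.coe_mul, Set.image_comp, hγ π', hγ π]

lemma gamma_one : γ (1 : autPi G) = 1 := by
  ext v
  exact gamma_uniq hred γ hγ 1 v v (by simp)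

lemma gamma_inv (π : autPi G) : γ π⁻¹ = (γ π)⁻¹ := by
  have := gamma_mul hred γ hγ π⁻¹ π
  rw [inv_mul_cancel, gamma_one hred γ hγ] at this
  exact eq_inv_of_mul_eq_one_left this.symm

lemma gamma_fixed_iff (σ : autPi G) : γ σ = σ ↔ (σ : Equiv.Perm V) ∈ autG G := by
  rw [mem_autG_iff_image]
  constructor
  · intro h v
    rw [hγ σ v, h]
  · intro h
    ext v
    exact gamma_uniq hred γ hγ σ v _ (h v)

lemma key_iff (π₁ π₂ : autPi G) :
    π₁⁻¹ * γ π₁ = π₂⁻¹ * γ π₂ ↔ ((π₂ * π₁⁻¹ : autPi G) : Equiv.Perm V) ∈ autG G := by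
  rw [← gamma_fixed_iff hred γ hγ]
  rw [gamma_mul hred γ hγ, gamma_inv hred γ hγ]
  constructor
  · intro h
    calc γ π₂ * (γ π₁)⁻¹ = π₂ * (π₂⁻¹ * γ π₂) * (γ π₁)⁻¹ := by group
    _ = π₂ * (π₁⁻¹ * γ π₁) * (γ π₁)⁻¹ := by rw [h]
    _ = π₂ * π₁⁻¹ := by group
  · intro h
    calc π₁⁻¹ * γ π₁ = π₂⁻¹ * (π₂ * π₁⁻¹) * γ π₁ := by group
    _ = π₂⁻¹ * (γ π₂ * (γ π₁)⁻¹) * γ π₁ := by rw [h]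
    _ = π₂⁻¹ * γ π₂ := by group

lemma alpha_card :
    Nat.card (autPi G) =
      Nat.card (autG G) * Nat.card (Set.range fun π : autPi G => π⁻¹ * γ π) := by
  classical
  set H := (autG G).subgroupOf (autPi G) with hH
  have hkey : ∀ x y : autPi G,
      ((y⁻¹ * x⁻¹⁻¹ : autPi G) : Equiv.Perm V) ∈ autG G ↔ x⁻¹ * y ∈ H := by
    intro x y
    have h1 : (y⁻¹ * x⁻¹⁻¹ : autPi G) = (x⁻¹ * y)⁻¹ := by group
    rw [h1, Subgroup.mem_subgroupOf, Subgroup.coe_inv, (autG G).inv_mem_iff]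
  have hwd : ∀ x y : autPi G, x⁻¹ * y ∈ H →
      (x⁻¹⁻¹ * γ x⁻¹ : autPi G) = y⁻¹⁻¹ * γ y⁻¹ := by
    intro x y hxy
    exact (key_iff hred γ hγ x⁻¹ y⁻¹).mpr ((hkey x y).mpr hxy)
  let f : (autPi G ⧸ H) → Set.range (fun π : autPi G => π⁻¹ * γ π) :=
    Quotient.lift (fun x => (⟨x⁻¹⁻¹ * γ x⁻¹, ⟨x⁻¹, rfl⟩⟩ :
      Set.range (fun π : autPi G => π⁻¹ * γ π)))
      (fun x y h => Subtype.ext (hwd x y (QuotientGroup.leftRel_apply.mp h)))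
  have hbij : Function.Bijective f := by
    constructor
    · intro a b
      induction a using Quotient.ind
      induction b using Quotient.ind
      rename_i x y
      intro h
      have h2 : (x⁻¹⁻¹ * γ x⁻¹ : autPi G) = y⁻¹⁻¹ * γ y⁻¹ := Subtype.ext_iff.mp h
      have h3 := (hkey x y).mp ((key_iff hred γ hγ x⁻¹ y⁻¹).mp h2)
      exact Quotient.sound (QuotientGroup.leftRel_apply.mpr h3)
    · rintro ⟨_, π, rfl⟩
      refine ⟨QuotientGroup.mk π⁻¹, ?_⟩
      apply Subtype.ext
      show (π⁻¹⁻¹⁻¹ * γ π⁻¹⁻¹ : autPi G) = π⁻¹ * γ π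
      simp only [inv_inv]
  have hcardeq : Nat.card (Set.range fun π : autPi G => π⁻¹ * γ π) = Nat.card (autPi G ⧸ H) :=
    (Nat.card_congr (Equiv.ofBijective f hbij)).symm
  have hHcard : Nat.card H = Nat.card (autG G) :=
    Nat.card_congr (Subgroup.subgroupOfEquivOfLe autG_le_autPi).toEquiv
  rw [Subgroup.card_eq_card_quotient_mul_card_subgroup H, hcardeq, hHcard, mul_comm]

lemma gamma_adj (g : autPi G) (v w : V) :
    G.Adj ((γ g : Equiv.Perm V) v) ((g : Equiv.Perm V) w) ↔ G.Adj v w := by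
  constructor
  · intro h
    have hw : (g : Equiv.Perm V) w ∈ G.neighborSet ((γ g : Equiv.Perm V) v) := h
    rw [← hγ g v] at hw
    obtain ⟨u, hu, hu2⟩ := hw
    rwa [(g : Equiv.Perm V).injective hu2] at hu
  · intro h
    have hw : (g : Equiv.Perm V) w ∈ (g : Equiv.Perm V) '' G.neighborSet v := ⟨w, h, rfl⟩
    rwa [hγ g v] at hw

lemma gamma_adj' (g : autPi G) (v w : V) :
    G.Adj ((g : Equiv.Perm V) v) ((γ g : Equiv.Perm V) w) ↔ G.Adj v w := by
  rw [G.adj_comm, gamma_adj hred γ hγ, G.adj_comm]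

end helpers

section doublecover
variable {V : Type*} [Fintype V] {G : SimpleGraph V}

/-- The underlying equiv of a double-cover automorphism built from two permutations. -/
def phiEquiv (g f : Equiv.Perm V) (b : Bool) : (V × Bool) ≃ (V × Bool) where
  toFun p := (cond p.2 (g p.1) (f p.1), Bool.xor b p.2)
  invFun p := (cond (Bool.xor b p.2) (g.symm p.1) (f.symm p.1), Bool.xor b p.2)
  left_inv p := by rcases p with ⟨v, i⟩; cases b <;> cases i <;> simp
  right_inv p := by rcases p with ⟨v, i⟩; cases b <;> cases i <;> simp

lemma dc_walk {u w : V} (p : G.Walk u w) (i : Bool) :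
    (doubleCover G).Reachable (u, i) (w, Bool.xor i (p.length % 2 == 1)) := by
  induction p generalizing i with
  | nil =>
    simpa using SimpleGraph.Reachable.refl _
  | @cons u v w h q ih =>
    have hstep : (doubleCover G).Adj (u, i) (v, !i) := ⟨h, by simp⟩
    have := hstep.reachable.trans (ih (!i))
    have hlen : ((q.cons h).length % 2 == 1) = !(q.length % 2 == 1) := by
      rw [SimpleGraph.Walk.length_cons]
      rcases Nat.mod_two_eq_zero_or_one q.length with hq | hq <;> simp [Nat.add_mod, hq]
    rw [hlen]
    have hxor : ∀ a c : Bool, Bool.xor (!a) c = Bool.xor a (!c) := by decide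
    rwa [← hxor]

lemma dc_preconnected (hconn : G.Connected)
    (hodd : ∃ (v : V) (c : G.Walk v v), Odd c.length) (x y : V × Bool) :
    (doubleCover G).Reachable x y := by
  obtain ⟨v₀, c, hc⟩ := hodd
  rcases x with ⟨u, i⟩
  rcases y with ⟨w, j⟩
  obtain ⟨q⟩ := hconn.preconnected u w
  by_cases hb : Bool.xor i (q.length % 2 == 1) = j
  · exact hb ▸ dc_walk q i
  · obtain ⟨r⟩ := hconn.preconnected u v₀
    set q2 := r.append (c.append (r.reverse.append q)) with hq2
    have hlen : q2.length = r.length + (c.length + (r.length + q.length)) := by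
      simp [hq2, SimpleGraph.Walk.length_append, SimpleGraph.Walk.length_reverse]
    have hc1 : c.length % 2 = 1 := Nat.odd_iff.mp hc
    have hmod : q2.length % 2 = (q.length + 1) % 2 := by omega
    have hpar : (q2.length % 2 == 1) = !(q.length % 2 == 1) := by
      rw [hmod]
      rcases Nat.mod_two_eq_zero_or_one q.length with hq | hq <;> simp [Nat.add_mod, hq]
    have hr := dc_walk q2 i
    rw [hpar] at hr
    have hj : Bool.xor i (!(q.length % 2 == 1)) = j := by
      revert hb
      generalize (q.length % 2 == 1) = d
      cases d <;> cases i <;> cases j <;> simp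
    exact hj ▸ hr

lemma sheet_const (φ : doubleCover G ≃g doubleCover G) {x y : V × Bool}
    (h : (doubleCover G).Reachable x y) :
    Bool.xor (φ x).2 x.2 = Bool.xor (φ y).2 y.2 := by
  obtain ⟨p⟩ := h
  induction p with
  | nil => rfl
  | @cons a b c hadj q ih =>
    refine Eq.trans ?_ ih
    have h2 : (doubleCover G).Adj (φ a) (φ b) := φ.map_rel_iff.mpr hadj
    have key : ∀ p q r s : Bool, p ≠ q → r ≠ s → Bool.xor r p = Bool.xor s q := by decide
    exact key a.2 b.2 (φ a).2 (φ b).2 hadj.2 h2.2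

end doublecover


section main
variable {V : Type*} [Fintype V] {G : SimpleGraph V}

def phiIso (hred : Reduced G) (γ : autPi G → autPi G)
    (hγ : ∀ (π : autPi G) (v : V),
      (π : Equiv.Perm V) '' G.neighborSet v = G.neighborSet ((γ π : Equiv.Perm V) v))
    (g : autPi G) (b : Bool) : doubleCover G ≃g doubleCover G where
  toEquiv := phiEquiv (g : Equiv.Perm V) (γ g : Equiv.Perm V) b
  map_rel_iff' := by
    rintro ⟨v, i⟩ ⟨w, j⟩
    show (doubleCover G).Adj _ _ ↔ (doubleCover G).Adj _ _
    simp only [phiEquiv, Equiv.coe_fn_mk, doubleCover]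
    cases i <;> cases j <;> cases b <;>
      simp [gamma_adj hred γ hγ, gamma_adj' hred γ hγ]

lemma dc_card (hred : Reduced G) (γ : autPi G → autPi G)
    (hγ : ∀ (π : autPi G) (v : V),
      (π : Equiv.Perm V) '' G.neighborSet v = G.neighborSet ((γ π : Equiv.Perm V) v))
    (hconn : G.Connected) (hodd : ∃ (v : V) (c : G.Walk v v), Odd c.length) :
    Nat.card (doubleCover G ≃g doubleCover G) = Nat.card (autPi G) * 2 := by
  classical
  haveI : Nonempty V := hconn.nonempty
  let Φ : autPi G × Bool → (doubleCover G ≃g doubleCover G) :=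
    fun p => phiIso hred γ hγ p.1 p.2
  have happly : ∀ (g : autPi G) (b : Bool) (v : V) (i : Bool),
      Φ (g, b) (v, i) = (cond i ((g : Equiv.Perm V) v) ((γ g : Equiv.Perm V) v), Bool.xor b i) :=
    fun g b v i => rfl
  have hbij : Function.Bijective Φ := by
    constructor
    · rintro ⟨g, b⟩ ⟨g', b'⟩ h
      obtain ⟨v₀⟩ := ‹Nonempty V›
      have h1 : ∀ x, Φ (g, b) x = Φ (g', b') x := fun x => by rw [h]
      have hb : b = b' := by
        have := congrArg Prod.snd (h1 (v₀, true))
        rw [happly, happly] at this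
        simpa using this
      have hg : g = g' := by
        apply Subtype.ext
        apply Equiv.ext
        intro v
        have := congrArg Prod.fst (h1 (v, true))
        rw [happly, happly] at this
        simpa using this
      rw [hg, hb]
    · intro φ
      obtain ⟨v₀⟩ := ‹Nonempty V›
      set b := (φ (v₀, false)).2 with hbdef
      have hb2 : ∀ x : V × Bool, (φ x).2 = Bool.xor b x.2 := by
        intro x
        have hcst := sheet_const φ (dc_preconnected hconn hodd (v₀, false) x)
        have key : ∀ p q r : Bool, Bool.xor p false = Bool.xor q r → q = Bool.xor p r := by
          decide
        exact key _ _ _ hcst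
      set g : V → V := fun v => (φ (v, true)).1 with hgdef
      set f : V → V := fun v => (φ (v, false)).1 with hfdef
      have hginj : Function.Injective g := by
        intro v v' hvv
        have h2 : φ (v, true) = φ (v', true) := by
          refine Prod.ext_iff.mpr ⟨hvv, ?_⟩
          rw [hb2, hb2]
        have := φ.toEquiv.injective h2
        exact (Prod.ext_iff.mp this).1
      let gPerm : Equiv.Perm V := Equiv.ofBijective g (Finite.injective_iff_bijective.mp hginj)
      have hadjfg : ∀ v w, G.Adj v w ↔ G.Adj (f v) (g w) := by
        intro v w
        have hs1 : (φ (v, false)).2 = b := by rw [hb2]; cases b <;> rfl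
        have hs2 : (φ (w, true)).2 = !b := by rw [hb2]; cases b <;> rfl
        have h2 := φ.map_rel_iff (a := (v, false)) (b := (w, true))
        constructor
        · intro h
          have := h2.mpr ⟨h, by simp⟩
          exact this.1
        · intro h
          have : (doubleCover G).Adj (φ (v, false)) (φ (w, true)) := by
            refine ⟨h, ?_⟩
            rw [hs1, hs2]
            cases b <;> simp
          exact (h2.mp this).1
      have himg : ∀ v, ⇑gPerm '' G.neighborSet v = G.neighborSet (f v) := by
        intro v
        ext x
        constructor
        · rintro ⟨w, hw, rfl⟩
          exact (hadjfg v w).mp hw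
        · intro hx
          obtain ⟨w, rfl⟩ := gPerm.surjective x
          exact ⟨w, (hadjfg v w).mpr hx, rfl⟩
      have hgmem : gPerm ∈ autPi G := fun v => ⟨f v, himg v⟩
      set G2 : autPi G := ⟨gPerm, hgmem⟩ with hG2
      have hγg : ∀ v, (γ G2 : Equiv.Perm V) v = f v :=
        fun v => gamma_uniq hred γ hγ G2 v (f v) (himg v)
      refine ⟨(G2, b), ?_⟩
      apply DFunLike.ext
      rintro ⟨v, i⟩
      cases i
      · rw [happly]
        refine Prod.ext_iff.mpr ⟨?_, ?_⟩
        · simpa using hγg v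
        · simp [(hb2 (v, false)).symm]
      · rw [happly]
        refine Prod.ext_iff.mpr ⟨rfl, (hb2 (v, true)).symm⟩
  rw [← Nat.card_congr (Equiv.ofBijective Φ hbij), Nat.card_prod]
  congr 1
  simp [Nat.card_eq_fintype_card]

end main

/-- For a reduced graph Γ: α(π₁) = α(π₂) iff the right cosets Aut(Γ)π₁, Aut(Γ)π₂
coincide; hence |Im α| = |Aut^π(Γ)| / |Aut(Γ)|; and if moreover Γ is connected and
nonbipartite, |Im α| equals the instability index |Aut(BΓ)| / (2·|Aut(Γ)|). -/
theorem stmt_2 {V : Type*} [Fintype V] (G : SimpleGraph V) (hred : Reduced G)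
    (γ : autPi G → autPi G)
    (hγ : ∀ (π : autPi G) (v : V),
      (π : Equiv.Perm V) '' G.neighborSet v = G.neighborSet ((γ π : Equiv.Perm V) v)) :
    (∀ π₁ π₂ : autPi G,
      π₁⁻¹ * γ π₁ = π₂⁻¹ * γ π₂ ↔
        (autG G : Set (Equiv.Perm V)) * {(π₁ : Equiv.Perm V)} =
          (autG G : Set (Equiv.Perm V)) * {(π₂ : Equiv.Perm V)}) ∧
    Nat.card (Set.range fun π : autPi G => π⁻¹ * γ π) =
      Nat.card (autPi G) / Nat.card (autG G) ∧
    Nat.card (autPi G) =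
      Nat.card (autG G) * Nat.card (Set.range fun π : autPi G => π⁻¹ * γ π) ∧
    (G.Connected → (∃ (v : V) (p : G.Walk v v), Odd p.length) →
      Nat.card ((doubleCover G) ≃g (doubleCover G)) =
        2 * Nat.card (autG G) * Nat.card (Set.range fun π : autPi G => π⁻¹ * γ π)) := by
  have hmul := alpha_card hred γ hγ
  refine ⟨?_, ?_, hmul, ?_⟩
  · intro π₁ π₂
    rw [key_iff hred γ hγ, coset_eq_iff]
    simp [Subgroup.coe_mul, Subgroup.coe_inv]
  · have hpos : 0 < Nat.card (autG G) := Nat.card_pos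
    rw [hmul, Nat.mul_div_cancel_left _ hpos]
  · intro hconn hodd
    rw [dc_card hred γ hγ hconn hodd, hmul]
    ring
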